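/- Let A be a unital complex C*-algebra with a tracial state τ and associated 2-norm ‖x‖₂ := (Re τ(x* x))^{1/2}. Let 0 < ε ≤ 1/2. Suppose y ∈ A satisfies ‖y‖ ≤ 1 and ‖y‖₂ ≥ 1 - 2ε, and that y = v · a for some unitary v ∈ A and some a ∈ A with 0 ≤ a ≤ 1. Then for every z ∈ A with ‖z - y‖₂ ≤ ε, there exists a unitary v ∈ A with ‖z - v‖₂ ≤ 4√ε. -/

import Mathlib

open scoped ComplexOrder


section Aux

variable {A : Type*} [CStarAlgebra A] [PartialOrder A] [StarOrderedRing A]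

lemma tau_nonneg' (τ : A →ₗ[ℂ] ℂ) (hτpos : ∀ x : A, 0 ≤ τ (star x * x))
    {p : A} (hp : 0 ≤ p) : 0 ≤ τ p := by
  rw [StarOrderedRing.nonneg_iff] at hp
  induction hp using AddSubmonoid.closure_induction with
  | mem x hx => obtain ⟨s, rfl⟩ := hx; exact hτpos s
  | zero => simp
  | add x y _ _ hx hy => rw [map_add]; exact add_nonneg hx hy

lemma tau_im' (τ : A →ₗ[ℂ] ℂ) (hτpos : ∀ x : A, 0 ≤ τ (star x * x))
    {b : A} (hb : IsSelfAdjoint b) : (τ b).im = 0 := by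
  have h1 := tau_nonneg' τ hτpos (CFC.posPart_nonneg b)
  have h2 := tau_nonneg' τ hτpos (CFC.negPart_nonneg b)
  have h3 : b⁺ - b⁻ = b := CFC.posPart_sub_negPart b hb
  rw [Complex.nonneg_iff] at h1 h2
  rw [← h3, map_sub, Complex.sub_im, ← h1.2, ← h2.2, sub_zero]

lemma tau_star' (τ : A →ₗ[ℂ] ℂ) (hτpos : ∀ x : A, 0 ≤ τ (star x * x))
    (x : A) : τ (star x) = starRingEnd ℂ (τ x) := by
  have hh : IsSelfAdjoint (x + star x) := by
    rw [IsSelfAdjoint, star_add, star_star, add_comm]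
  have hc : IsSelfAdjoint (Complex.I • (x - star x)) := by
    rw [IsSelfAdjoint, star_smul, star_sub, star_star, Complex.star_def, Complex.conj_I,
      neg_smul, ← smul_neg, neg_sub]
  have e1 : (x + star x) - Complex.I • (Complex.I • (x - star x)) = x + x := by
    rw [smul_smul, Complex.I_mul_I, neg_one_smul]; abel
  have e2 : (x + star x) + Complex.I • (Complex.I • (x - star x)) = star x + star x := by
    rw [smul_smul, Complex.I_mul_I, neg_one_smul]; abel
  have hτh := tau_im' τ hτpos hh
  have hτc := tau_im' τ hτpos hc
  have hconj : ∀ z : ℂ, z.im = 0 → starRingEnd ℂ z = z := fun z hz =>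
    Complex.conj_eq_iff_im.mpr hz
  have t1 : τ x + τ x = τ (x + star x) - Complex.I * τ (Complex.I • (x - star x)) := by
    conv_lhs => rw [← map_add, ← e1]
    rw [map_sub, map_smul, smul_eq_mul]
  have t2 : τ (star x) + τ (star x)
      = τ (x + star x) + Complex.I * τ (Complex.I • (x - star x)) := by
    conv_lhs => rw [← map_add, ← e2]
    rw [map_add, map_smul, smul_eq_mul]
  have t1' := congrArg (starRingEnd ℂ) t1
  simp only [map_add (starRingEnd ℂ), map_sub (starRingEnd ℂ), map_mul, Complex.conj_I, hconj _ hτh, hconj _ hτc] at t1'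
  linear_combination (t2 - t1') / 2

end Aux

section Aux2

variable {A : Type*} [CStarAlgebra A] [PartialOrder A] [StarOrderedRing A]

noncomputable def tauCore (τ : A →ₗ[ℂ] ℂ) (hτpos : ∀ x : A, 0 ≤ τ (star x * x)) :
    PreInnerProductSpace.Core ℂ A where
  inner x y := τ (star x * y)
  conj_inner_symm x y := by
    show starRingEnd ℂ (τ (star y * x)) = τ (star x * y)
    rw [← tau_star' τ hτpos, star_mul, star_star]
  re_inner_nonneg x := by
    have := (Complex.nonneg_iff.mp (hτpos x)).1
    simpa using this
  add_left x y z := by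
    show τ (star (x + y) * z) = τ (star x * z) + τ (star y * z)
    rw [star_add, add_mul, map_add]
  smul_left x y r := by
    show τ (star (r • x) * y) = starRingEnd ℂ r * τ (star x * y)
    rw [star_smul, smul_mul_assoc, map_smul, Complex.star_def, smul_eq_mul]

lemma tau_triangle (τ : A →ₗ[ℂ] ℂ) (hτpos : ∀ x : A, 0 ≤ τ (star x * x)) (x y : A) :
    Real.sqrt (τ (star (x + y) * (x + y))).re ≤
      Real.sqrt (τ (star x * x)).re + Real.sqrt (τ (star y * y)).re := by
  letI c : PreInnerProductSpace.Core ℂ A := tauCore τ hτpos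
  letI : Inner ℂ A := InnerProductSpace.Core.toPreInner'
  have cs := InnerProductSpace.Core.inner_mul_inner_self_le (𝕜 := ℂ) (F := A) x y
  have hinner : ∀ u w : A, inner ℂ u w = τ (star u * w) := fun u w => rfl
  set rxx := (τ (star x * x)).re with hrxx
  set ryy := (τ (star y * y)).re with hryy
  have h0x : 0 ≤ rxx := by simpa using (Complex.nonneg_iff.mp (hτpos x)).1
  have h0y : 0 ≤ ryy := by simpa using (Complex.nonneg_iff.mp (hτpos y)).1
  have hsymm : ‖τ (star y * x)‖ = ‖τ (star x * y)‖ := by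
    rw [show star y * x = star (star x * y) by rw [star_mul, star_star], tau_star' τ hτpos]
    exact RCLike.norm_conj _
  have cs' : ‖τ (star x * y)‖ ≤ Real.sqrt rxx * Real.sqrt ryy := by
    rw [hinner, hinner, hinner, hinner] at cs
    simp only [RCLike.re_to_complex] at cs
    rw [hsymm, ← sq] at cs
    rw [← Real.sqrt_mul h0x]
    exact (Real.le_sqrt (norm_nonneg _) (by positivity)).mpr (by simpa [sq] using cs)
  have hexp : (τ (star (x + y) * (x + y))).re
      = rxx + 2 * (τ (star x * y)).re + ryy := by
    have : star (x + y) * (x + y)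
        = star x * x + (star x * y + (star y * x + star y * y)) := by
      rw [star_add]; noncomm_ring
    rw [this, map_add, map_add, map_add]
    have : (τ (star y * x)).re = (τ (star x * y)).re := by
      rw [show star y * x = star (star x * y) by rw [star_mul, star_star], tau_star' τ hτpos,
        Complex.conj_re]
    simp [Complex.add_re, this]; ring
  have hre : (τ (star x * y)).re ≤ Real.sqrt rxx * Real.sqrt ryy :=
    le_trans (Complex.re_le_norm _) cs'
  have : (τ (star (x + y) * (x + y))).re ≤ (Real.sqrt rxx + Real.sqrt ryy) ^ 2 := by
    rw [hexp]
    have hx2 : Real.sqrt rxx ^ 2 = rxx := Real.sq_sqrt h0x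
    have hy2 : Real.sqrt ryy ^ 2 = ryy := Real.sq_sqrt h0y
    nlinarith [hre]
  calc Real.sqrt (τ (star (x + y) * (x + y))).re
      ≤ Real.sqrt ((Real.sqrt rxx + Real.sqrt ryy) ^ 2) := Real.sqrt_le_sqrt this
    _ = Real.sqrt rxx + Real.sqrt ryy := Real.sqrt_sq (by positivity)

end Aux2

/-- Quantitative version of the paper's Lemma: if `y` is a contraction with
`‖y‖₂ ≥ 1 - 2ε` admitting a polar decomposition with unitary polar part, then any
`z` with `‖z - y‖₂ ≤ ε` is within `4√ε` (in 2-norm) of a unitary. -/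
theorem close_to_unitary_of_close_to_almost_unitary
    {A : Type*} [CStarAlgebra A] [PartialOrder A] [StarOrderedRing A]
    (τ : A →ₗ[ℂ] ℂ)
    (hτ1 : τ 1 = 1)
    (hτpos : ∀ x : A, 0 ≤ τ (star x * x))
    (hτtr : ∀ x y : A, τ (x * y) = τ (y * x))
    (ε : ℝ) (hε0 : 0 < ε) (hε1 : ε ≤ 1 / 2)
    (y v a : A)
    (hynorm : ‖y‖ ≤ 1)
    (hy2norm : 1 - 2 * ε ≤ Real.sqrt (τ (star y * y)).re)
    (hv : star v * v = 1 ∧ v * star v = 1)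
    (ha0 : 0 ≤ a) (ha1 : a ≤ 1)
    (hy : y = v * a) :
    ∀ z : A, Real.sqrt (τ (star (z - y) * (z - y))).re ≤ ε →
      ∃ w : A, (star w * w = 1 ∧ w * star w = 1) ∧
        Real.sqrt (τ (star (z - w) * (z - w))).re ≤ 4 * Real.sqrt ε := by
  intro z hz
  refine ⟨v, hv, ?_⟩
  have hsa : IsSelfAdjoint a := ha0.isSelfAdjoint
  have hsq : CFC.sqrt a * CFC.sqrt a = a := CFC.sqrt_mul_sqrt_self a ha0
  -- star y * y = a * a
  have hyy : star y * y = a * a := by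
    rw [hy, star_mul, hsa.star_eq, mul_assoc, ← mul_assoc (star v) v a, hv.1, one_mul]
  -- the 2-norm of y - v
  have hyv : y - v = v * (a - 1) := by rw [hy, mul_sub, mul_one]
  have hvv : star (y - v) * (y - v) = (a - 1) * (a - 1) := by
    rw [hyv, star_mul, star_sub, hsa.star_eq, star_one, mul_assoc,
      ← mul_assoc (star v) v (a - 1), hv.1, one_mul]
  set t1 := (τ a).re with ht1
  set t2 := (τ (a * a)).re with ht2
  have h0t2 : 0 ≤ t2 := by
    have := (Complex.nonneg_iff.mp (hτpos a)).1
    rwa [hsa.star_eq] at this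
  -- t2 ≤ t1
  have h21 : t2 ≤ t1 := by
    set s := CFC.sqrt a with hs
    have hss : IsSelfAdjoint s := (CFC.sqrt_nonneg (a := a)).isSelfAdjoint
    have h1a : (0 : A) ≤ 1 - s * s := by rw [hsq]; exact sub_nonneg.mpr ha1
    have key : 0 ≤ star s * (1 - s * s) * s := star_left_conjugate_nonneg h1a s
    have heq : star s * (1 - s * s) * s = a - a * a := by
      rw [hss.star_eq, ← hsq]; noncomm_ring
    rw [heq] at key
    have := (Complex.nonneg_iff.mp (tau_nonneg' τ hτpos key)).1
    rw [map_sub, Complex.sub_re] at this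
    linarith
  -- lower bound for t2
  have hlow : (1 - 2 * ε) ^ 2 ≤ t2 := by
    rw [hyy] at hy2norm
    exact (Real.le_sqrt (by linarith) h0t2).mp hy2norm
  -- the 2-norm of y - v squared
  have hnv2 : (τ (star (y - v) * (y - v))).re = t2 - 2 * t1 + 1 := by
    have hexp : (a - 1) * (a - 1) = a * a - a - a + 1 := by noncomm_ring
    rw [hvv, hexp, map_add, map_sub, map_sub, hτ1]
    simp [Complex.add_re, Complex.sub_re, Complex.one_re]
    ring
  have hb : (τ (star (y - v) * (y - v))).re ≤ 4 * ε := by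
    rw [hnv2]; nlinarith
  have hnv : Real.sqrt (τ (star (y - v) * (y - v))).re ≤ 2 * Real.sqrt ε := by
    calc Real.sqrt (τ (star (y - v) * (y - v))).re ≤ Real.sqrt (4 * ε) :=
          Real.sqrt_le_sqrt hb
      _ = 2 * Real.sqrt ε := by
          rw [show (4 : ℝ) * ε = 2 ^ 2 * ε by ring, Real.sqrt_mul (by positivity),
            Real.sqrt_sq (by norm_num)]
  have htri := tau_triangle τ hτpos (z - y) (y - v)
  rw [show z - y + (y - v) = z - v by abel] at htri
  have hsε : Real.sqrt ε ≤ 1 := Real.sqrt_le_one.mpr (by linarith)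
  have hεs : ε ≤ Real.sqrt ε := by
    nlinarith [Real.sq_sqrt hε0.le, Real.sqrt_nonneg ε]
  linarith
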